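/- Let k be a field and 𝒜 a finite-dimensional category such that every representable right 𝒜-module and every representable left 𝒜-module satisfies the descending chain condition on subobjects (i.e. Mod-𝒜 is Artinian). Then for an object V of Mod-𝒜 the following are equivalent: (a) V is finitely generated; (b) V is finitely cogenerated; (c) V has finite length. -/

import Mathlib

open CategoryTheory CategoryTheory.Limits Opposite

section
variable (k : Type) [Field k]

/-- `k`-linearity on the opposite category. -/
instance oppositeLinear (C : Type*) [Category C] [Preadditive C] [CategoryTheory.Linear k C] :
    CategoryTheory.Linear k Cᵒᵖ where
  homModule X Y := Equiv.module k (opEquiv X Y)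
  smul_comp _ _ _ _ _ _ :=
    Quiver.Hom.unop_inj (CategoryTheory.Linear.comp_smul _ _ _ _ _ _)
  comp_smul _ _ _ _ _ _ :=
    Quiver.Hom.unop_inj (CategoryTheory.Linear.smul_comp _ _ _ _ _ _)

@[simp] lemma unop_ksmul {C : Type*} [Category C] [Preadditive C]
    [CategoryTheory.Linear k C] {X Y : Cᵒᵖ} (r : k) (f : X ⟶ Y) :
    (r • f).unop = r • f.unop := rfl

/-- The property of a functor between `k`-linear categories being `k`-linear
(in particular additive). -/
def IsKLinear {C D : Type*} [Category C] [Category D] [Preadditive C] [Preadditive D]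
    [CategoryTheory.Linear k C] [CategoryTheory.Linear k D] (F : C ⥤ D) : Prop :=
  ∃ _h : F.Additive, Functor.Linear k F

/-- The category `Mod-A` of right modules over a small `k`-linear category `A`:
`k`-linear functors `Aᵒᵖ ⥤ ModuleCat k`. -/
abbrev RMod (A : Type) [SmallCategory A] [Preadditive A] [CategoryTheory.Linear k A] :=
  ObjectProperty.FullSubcategory (fun F : Aᵒᵖ ⥤ ModuleCat.{0} k => IsKLinear k F)

/-- The category `A-Mod` of left modules over a small `k`-linear category `A`:
`k`-linear functors `A ⥤ ModuleCat k`. -/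
abbrev LMod (A : Type) [SmallCategory A] [Preadditive A] [CategoryTheory.Linear k A] :=
  ObjectProperty.FullSubcategory (fun F : A ⥤ ModuleCat.{0} k => IsKLinear k F)

variable {k}

instance linYonObjLinear {C : Type*} [Category C] [Preadditive C] [CategoryTheory.Linear k C]
    (x : C) : ((linearYoneda k C).obj x).Linear k where
  map_smul f r := by
    ext (g : _ ⟶ x)
    exact CategoryTheory.Linear.smul_comp _ _ _ _ _ _

instance linCoyonObjLinear {C : Type*} [Category C] [Preadditive C] [CategoryTheory.Linear k C]
    (x : Cᵒᵖ) : ((linearCoyoneda k C).obj x).Linear k where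
  map_smul f r := by
    ext (g : x.unop ⟶ _)
    exact CategoryTheory.Linear.comp_smul _ _ _ _ _ _

variable (k)
variable (A : Type) [SmallCategory A] [Preadditive A] [CategoryTheory.Linear k A]

/-- The representable right `A`-module `Hom_A(−, x)`. -/
def reprR (x : A) : RMod k A :=
  ⟨(linearYoneda k A).obj x, inferInstance, inferInstance⟩

/-- The representable left `A`-module `Hom_A(x, −)`. -/
def reprL (x : A) : LMod k A :=
  ⟨(linearCoyoneda k A).obj (op x), inferInstance, inferInstance⟩

/-- The underlying functor of a finite direct sum of representable right modules. -/
def sumReprRFunctor {n : ℕ} (x : Fin n → A) : Aᵒᵖ ⥤ ModuleCat.{0} k where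
  obj y := ModuleCat.of k (∀ i, y.unop ⟶ x i)
  map {y z} f := ModuleCat.ofHom
    (LinearMap.pi fun i =>
      (CategoryTheory.Linear.leftComp k (x i) f.unop).comp (LinearMap.proj i))
  map_id y := by
    refine ModuleCat.hom_ext (LinearMap.ext fun g => ?_)
    funext i
    simp
  map_comp f g := by
    refine ModuleCat.hom_ext (LinearMap.ext fun h => ?_)
    funext i
    simp

instance sumReprRFunctor_additive {n : ℕ} (x : Fin n → A) :
    (sumReprRFunctor k A x).Additive where
  map_add {y z f g} := by
    refine ModuleCat.hom_ext (LinearMap.ext fun h => ?_)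
    funext i
    simp [sumReprRFunctor, Preadditive.add_comp]
    change (f.unop + g.unop) ≫ h i = f.unop ≫ h i + g.unop ≫ h i
    exact Preadditive.add_comp _ _ _ _ _ _

instance sumReprRFunctor_linear {n : ℕ} (x : Fin n → A) :
    (sumReprRFunctor k A x).Linear k where
  map_smul {y z} f r := by
    refine ModuleCat.hom_ext (LinearMap.ext fun h => ?_)
    funext i
    simp [sumReprRFunctor]
    change (r • f.unop) ≫ h i = r • (f.unop ≫ h i)
    exact CategoryTheory.Linear.smul_comp _ _ _ _ _ _

/-- The finite direct sum of the representable right modules `Hom_A(−, x i)`. -/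
def sumReprR {n : ℕ} (x : Fin n → A) : RMod k A :=
  ⟨sumReprRFunctor k A x, inferInstance, inferInstance⟩

/-- A right module is finitely generated if it admits an epimorphism from a finite
direct sum of representable modules. -/
def RMod.IsFG (V : RMod k A) : Prop :=
  ∃ (n : ℕ) (x : Fin n → A) (p : sumReprR k A x ⟶ V), Epi p

/-- A right module `V` is finitely cogenerated if every family of subobjects of `V`
with infimum `0` admits a finite subfamily with infimum `0`.  (A family of subobjects
has infimum `0` precisely when the only subobject of `V` contained in all of its
members is the zero subobject, and a subobject `t : T ⟶ V` is the zero subobject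
exactly when `t = 0`; here a subobject contained in a member `f j : D j ⟶ V` of the
family means a monomorphism into `V` factoring through `f j`.) -/
def RMod.IsFCog (V : RMod k A) : Prop :=
  ∀ (J : Type) (D : J → RMod k A) (f : ∀ j, D j ⟶ V), (∀ j, Mono (f j)) →
    (∀ (T : RMod k A) (t : T ⟶ V), Mono t → (∀ j, ∃ u : T ⟶ D j, u ≫ f j = t) → t = 0) →
    ∃ s : Finset J, ∀ (T : RMod k A) (t : T ⟶ V), Mono t →
      (∀ j ∈ s, ∃ u : T ⟶ D j, u ≫ f j = t) → t = 0

/-! ### Auxiliary development -/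
section Generic
set_option linter.unusedSectionVars false
variable {k : Type} [Field k]
variable {B : Type} [SmallCategory B] [Preadditive B] [CategoryTheory.Linear k B]

/-- The category of `k`-linear functors `B ⥤ ModuleCat k`. -/
abbrev KMod (k : Type) [Field k] (B : Type) [SmallCategory B] [Preadditive B]
    [CategoryTheory.Linear k B] :=
  ObjectProperty.FullSubcategory (fun F : B ⥤ ModuleCat.{0} k => IsKLinear k F)

lemma KMod.hom_ext {V W : KMod k B} {f g : V ⟶ W}
    (h : ∀ (y : B) (v : V.obj.obj y), f.hom.app y v = g.hom.app y v) : f = g := by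
  apply InducedCategory.hom_ext
  apply NatTrans.ext
  funext y
  exact ModuleCat.hom_ext (LinearMap.ext (h y))

/-- A subfunctor of a functor to modules. -/
structure Subfunctor (F : B ⥤ ModuleCat.{0} k) where
  N : ∀ y : B, Submodule k (F.obj y)
  stable : ∀ {y z : B} (f : y ⟶ z), ∀ v ∈ N y, F.map f v ∈ N z

namespace Subfunctor
variable {F G E : B ⥤ ModuleCat.{0} k}

lemma ext' {S T : Subfunctor F} (h : S.N = T.N) : S = T := by
  cases S; cases T; simpa using h

instance : PartialOrder (Subfunctor F) where
  le S T := ∀ y, S.N y ≤ T.N y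
  le_refl S y := le_rfl
  le_trans S T U h1 h2 y := (h1 y).trans (h2 y)
  le_antisymm S T h1 h2 := ext' (funext fun y => le_antisymm (h1 y) (h2 y))

instance : Lattice (Subfunctor F) where
  inf S T := ⟨fun y => S.N y ⊓ T.N y, fun f v hv => ⟨S.stable f v hv.1, T.stable f v hv.2⟩⟩
  inf_le_left S T y := inf_le_left
  inf_le_right S T y := inf_le_right
  le_inf S T U h1 h2 y := le_inf (h1 y) (h2 y)
  sup S T := ⟨fun y => S.N y ⊔ T.N y, by
    intro y z f v hv
    rw [Submodule.mem_sup] at hv ⊢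
    obtain ⟨a, ha, b, hb, rfl⟩ := hv
    exact ⟨F.map f a, S.stable f a ha, F.map f b, T.stable f b hb, (map_add _ _ _).symm⟩⟩
  le_sup_left S T y := le_sup_left
  le_sup_right S T y := le_sup_right
  sup_le S T U h1 h2 y := sup_le (h1 y) (h2 y)

instance : BoundedOrder (Subfunctor F) where
  top := ⟨fun _ => ⊤, fun _ _ _ => trivial⟩
  le_top S y := le_top
  bot := ⟨fun _ => ⊥, fun f v hv => by simp [Submodule.mem_bot] at hv ⊢; simp [hv]⟩
  bot_le S y := bot_le

lemma le_def {S T : Subfunctor F} : S ≤ T ↔ ∀ y, S.N y ≤ T.N y := Iff.rfl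
@[simp] lemma inf_N (S T : Subfunctor F) (y : B) : (S ⊓ T).N y = S.N y ⊓ T.N y := rfl
@[simp] lemma sup_N (S T : Subfunctor F) (y : B) : (S ⊔ T).N y = S.N y ⊔ T.N y := rfl
@[simp] lemma top_N (y : B) : (⊤ : Subfunctor F).N y = ⊤ := rfl
@[simp] lemma bot_N (y : B) : (⊥ : Subfunctor F).N y = ⊥ := rfl

lemma eq_bot_iff' (S : Subfunctor F) : S = ⊥ ↔ ∀ y, ∀ v ∈ S.N y, v = (0 : F.obj y) := by
  constructor
  · rintro rfl y v hv; simpa using hv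
  · intro h
    apply ext'
    funext y
    exact le_antisymm (fun v hv => by simp [h y v hv]) bot_le

lemma eq_top_iff' (S : Subfunctor F) : S = ⊤ ↔ ∀ y (v : F.obj y), v ∈ S.N y := by
  constructor
  · rintro rfl y v; trivial
  · intro h
    apply ext'
    funext y
    exact le_antisymm le_top (fun v _ => h y v)

lemma nat_apply (η : F ⟶ G) {y z : B} (f : y ⟶ z) (v : F.obj y) :
    η.app z (F.map f v) = G.map f (η.app y v) := by
  exact NatTrans.naturality_apply η f v

/-- range of a natural transformation -/
def range (η : F ⟶ G) : Subfunctor G where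
  N y := LinearMap.range (η.app y).hom
  stable {y z} f := by
    rintro v ⟨u, rfl⟩
    exact ⟨F.map f u, nat_apply η f u⟩

/-- kernel of a natural transformation -/
def ker (η : F ⟶ G) : Subfunctor F where
  N y := LinearMap.ker (η.app y).hom
  stable {y z} f v hv := by
    simp only [LinearMap.mem_ker] at hv ⊢
    rw [nat_apply η f v, hv, map_zero]

def comap (η : F ⟶ G) (T : Subfunctor G) : Subfunctor F where
  N y := Submodule.comap (η.app y).hom (T.N y)
  stable {y z} f v hv := by
    simp only [Submodule.mem_comap] at hv ⊢
    rw [nat_apply η f v]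
    exact T.stable f _ hv

def map (η : F ⟶ G) (S : Subfunctor F) : Subfunctor G where
  N y := Submodule.map (η.app y).hom (S.N y)
  stable {y z} f := by
    rintro v ⟨u, hu, rfl⟩
    exact ⟨F.map f u, S.stable f u hu, nat_apply η f u⟩

@[simp] lemma range_N (η : F ⟶ G) (y : B) : (range η).N y = LinearMap.range (η.app y).hom := rfl
@[simp] lemma ker_N (η : F ⟶ G) (y : B) : (ker η).N y = LinearMap.ker (η.app y).hom := rfl
@[simp] lemma comap_N (η : F ⟶ G) (T : Subfunctor G) (y : B) :
    (comap η T).N y = Submodule.comap (η.app y).hom (T.N y) := rfl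
@[simp] lemma map_N (η : F ⟶ G) (S : Subfunctor F) (y : B) :
    (map η S).N y = Submodule.map (η.app y).hom (S.N y) := rfl

lemma comap_mono (η : F ⟶ G) : Monotone (comap η) :=
  fun _ _ h y => Submodule.comap_mono (h y)
lemma map_mono (η : F ⟶ G) : Monotone (map η) :=
  fun _ _ h y => Submodule.map_mono (h y)

/-- The underlying functor of a subfunctor. -/
def toFunctor (S : Subfunctor F) : B ⥤ ModuleCat.{0} k where
  obj y := ModuleCat.of k (S.N y)
  map {y z} f := ModuleCat.ofHom ((F.map f).hom.restrict (fun v hv => S.stable f v hv))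
  map_id y := by
    apply ModuleCat.hom_ext
    apply LinearMap.ext
    rintro ⟨v, hv⟩
    apply Subtype.ext
    show F.map (𝟙 y) v = v
    rw [F.map_id]
    rfl
  map_comp {x y z} f g := by
    apply ModuleCat.hom_ext
    apply LinearMap.ext
    rintro ⟨v, hv⟩
    apply Subtype.ext
    show F.map (f ≫ g) v = F.map g (F.map f v)
    rw [F.map_comp]
    rfl

@[simp] lemma toFunctor_map_apply (S : Subfunctor F) {y z : B} (f : y ⟶ z)
    (v : S.toFunctor.obj y) : (S.toFunctor.map f v).1 = F.map f v.1 := rfl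

/-- The inclusion of a subfunctor. -/
def ι (S : Subfunctor F) : S.toFunctor ⟶ F where
  app y := ModuleCat.ofHom (S.N y).subtype
  naturality {y z} f := by
    apply ModuleCat.hom_ext
    apply LinearMap.ext
    rintro ⟨v, hv⟩
    show (F.map f v : F.obj z) = F.map f v
    rfl

@[simp] lemma ι_apply (S : Subfunctor F) (y : B) (v : S.toFunctor.obj y) :
    S.ι.app y v = v.1 := rfl

lemma ι_injective (S : Subfunctor F) (y : B) : Function.Injective (S.ι.app y) :=
  Subtype.val_injective

@[simp] lemma range_ι (S : Subfunctor F) : range S.ι = S := by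
  apply ext'
  funext y
  apply le_antisymm
  · rintro v ⟨u, rfl⟩; exact u.2
  · intro v hv; exact ⟨⟨v, hv⟩, rfl⟩

lemma toFunctor_isKLinear (hF : IsKLinear k F) (S : Subfunctor F) :
    IsKLinear k S.toFunctor := by
  obtain ⟨hAdd, hLin⟩ := id hF
  haveI := hAdd; haveI := hLin
  have hA : S.toFunctor.Additive := by
    constructor
    intro y z f g
    apply ModuleCat.hom_ext
    apply LinearMap.ext
    rintro ⟨v, hv⟩
    apply Subtype.ext
    have h1 : ((S.toFunctor.map f + S.toFunctor.map g) ⟨v, hv⟩).1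
        = F.map f v + F.map g v := rfl
    rw [h1]
    show F.map (f + g) v = _
    rw [F.map_add]
    rfl
  refine ⟨hA, ?_⟩
  haveI := hA
  constructor
  intro y z f r
  apply ModuleCat.hom_ext
  apply LinearMap.ext
  rintro ⟨v, hv⟩
  apply Subtype.ext
  have h1 : ((r • S.toFunctor.map f) ⟨v, hv⟩).1 = r • F.map f v := rfl
  rw [h1]
  show F.map (r • f) v = _
  rw [F.map_smul]
  rfl

/-- The quotient functor by a subfunctor. -/
def quot (S : Subfunctor F) : B ⥤ ModuleCat.{0} k where
  obj y := ModuleCat.of k (F.obj y ⧸ S.N y)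
  map {y z} f := ModuleCat.ofHom
    (Submodule.mapQ (S.N y) (S.N z) (F.map f).hom (fun v hv => S.stable f v hv))
  map_id y := by
    apply ModuleCat.hom_ext
    apply Submodule.linearMap_qext
    apply LinearMap.ext
    intro v
    show Submodule.Quotient.mk (F.map (𝟙 y) v) = Submodule.Quotient.mk v
    rw [F.map_id]
    rfl
  map_comp {x y z} f g := by
    apply ModuleCat.hom_ext
    apply Submodule.linearMap_qext
    apply LinearMap.ext
    intro v
    show Submodule.Quotient.mk (F.map (f ≫ g) v) = Submodule.Quotient.mk (F.map g (F.map f v))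
    rw [F.map_comp]
    rfl

@[simp] lemma quot_map_mk (S : Subfunctor F) {y z : B} (f : y ⟶ z) (v : F.obj y) :
    (quot S).map f (Submodule.Quotient.mk v)
      = (Submodule.Quotient.mk (F.map f v) : F.obj z ⧸ S.N z) := rfl

def quotπ (S : Subfunctor F) : F ⟶ quot S where
  app y := ModuleCat.ofHom (S.N y).mkQ
  naturality {y z} f := by
    apply ModuleCat.hom_ext
    apply LinearMap.ext
    intro v
    rfl

@[simp] lemma quotπ_apply (S : Subfunctor F) (y : B) (v : F.obj y) :
    (quotπ S).app y v = Submodule.Quotient.mk v := rfl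

lemma quotπ_surjective (S : Subfunctor F) (y : B) :
    Function.Surjective ((quotπ S).app y) :=
  Submodule.mkQ_surjective _

@[simp] lemma ker_quotπ (S : Subfunctor F) : ker (quotπ S) = S := by
  apply ext'
  funext y
  exact Submodule.ker_mkQ _

lemma quot_isKLinear (hF : IsKLinear k F) (S : Subfunctor F) : IsKLinear k (quot S) := by
  obtain ⟨hAdd, hLin⟩ := id hF
  haveI := hAdd; haveI := hLin
  have hA : (quot S).Additive := by
    constructor
    intro y z f g
    apply ModuleCat.hom_ext
    apply Submodule.linearMap_qext
    apply LinearMap.ext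
    intro v
    show Submodule.Quotient.mk (F.map (f + g) v)
      = (S.quot.map f + S.quot.map g) (Submodule.Quotient.mk v)
    rw [F.map_add]
    rfl
  refine ⟨hA, ?_⟩
  haveI := hA
  constructor
  intro y z f r
  apply ModuleCat.hom_ext
  apply Submodule.linearMap_qext
  apply LinearMap.ext
  intro v
  show Submodule.Quotient.mk (F.map (r • f) v)
    = (r • S.quot.map f) (Submodule.Quotient.mk v)
  rw [F.map_smul]
  rfl

end Subfunctor

open Subfunctor

section KModObjects
variable {V W T : KMod k B}

lemma kzero_app (X Y : KMod k B) (y : B) (v : X.obj.obj y) : (0 : X ⟶ Y).hom.app y v = 0 := rfl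

lemma comp_app {X Y Z : KMod k B} (f : X ⟶ Y) (g : Y ⟶ Z) (y : B) (v : X.obj.obj y) :
    (f ≫ g).hom.app y v = g.hom.app y (f.hom.app y v) := rfl

/-- The object of `KMod` attached to a subfunctor. -/
def toObj (S : Subfunctor V.obj) : KMod k B := ⟨S.toFunctor, toFunctor_isKLinear V.property S⟩

/-- The inclusion, as a morphism of `KMod`. -/
def ιm (S : Subfunctor V.obj) : toObj S ⟶ V := ObjectProperty.homMk S.ι

@[simp] lemma ιm_apply (S : Subfunctor V.obj) (y : B) (v : (toObj S).obj.obj y) :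
    (ιm S).hom.app y v = v.1 := rfl

@[simp] lemma range_ιm (S : Subfunctor V.obj) : range (ιm S).hom = S := range_ι S

lemma mono_of_injective {f : W ⟶ V} (h : ∀ y, Function.Injective (f.hom.app y)) : Mono f := by
  constructor
  intro Z g g' w
  apply KMod.hom_ext
  intro y v
  apply h y
  exact congrArg (fun q : Z ⟶ V => q.hom.app y v) w

instance (S : Subfunctor V.obj) : Mono (ιm S) :=
  mono_of_injective (fun y => Subtype.val_injective)

lemma injective_of_mono {f : W ⟶ V} (hf : Mono f) (y : B) : Function.Injective (f.hom.app y) := by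
  set K : Subfunctor W.obj := Subfunctor.ker (F := W.obj) (G := V.obj) f.hom with hKdef
  have hzero : ιm K ≫ f = (0 : toObj K ⟶ W) ≫ f := by
    apply KMod.hom_ext
    intro z v
    rw [comp_app, comp_app, kzero_app, map_zero, ιm_apply]
    exact v.2
  have hk : ιm K = (0 : toObj K ⟶ W) := by
    haveI := hf
    exact (cancel_mono f).mp hzero
  have hker : LinearMap.ker (f.hom.app y).hom = ⊥ := by
    apply le_antisymm _ bot_le
    intro v hv
    have h3 := congrArg (fun q : toObj K ⟶ W => q.hom.app y ⟨v, hv⟩) hk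
    exact h3
  exact LinearMap.ker_eq_bot.mp hker

lemma epi_of_surjective {f : W ⟶ V} (h : ∀ y, Function.Surjective (f.hom.app y)) : Epi f := by
  constructor
  intro Z g g' w
  apply KMod.hom_ext
  intro y v
  obtain ⟨u, rfl⟩ := h y v
  exact congrArg (fun q : W ⟶ Z => q.hom.app y u) w

lemma surjective_of_epi {f : W ⟶ V} (hf : Epi f) (y : B) : Function.Surjective (f.hom.app y) := by
  set R : Subfunctor V.obj := range f.hom with hRdef
  set Q : KMod k B := ⟨R.quot, quot_isKLinear V.property _⟩ with hQ
  set π : V ⟶ Q := ObjectProperty.homMk R.quotπ with hπdef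
  have hzero : f ≫ π = f ≫ (0 : V ⟶ Q) := by
    apply KMod.hom_ext
    intro z v
    rw [comp_app, comp_app, kzero_app]
    show R.quotπ.app z (f.hom.app z v) = 0
    rw [quotπ_apply]
    exact (Submodule.Quotient.mk_eq_zero (R.N z)).mpr ⟨v, rfl⟩
  haveI := hf
  have hπ : π = 0 := (cancel_epi f).mp hzero
  intro v
  have h3 := congrArg (fun q : V ⟶ Q => q.hom.app y v) hπ
  have h4 : R.quotπ.app y v = 0 := h3
  rw [quotπ_apply] at h4
  exact (Submodule.Quotient.mk_eq_zero (R.N y)).mp h4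

lemma range_comp_le {t : T ⟶ V} {u : T ⟶ W} {f : W ⟶ V} (w : u ≫ f = t) :
    range t.hom ≤ range f.hom := by
  intro y v hv
  obtain ⟨x, rfl⟩ := hv
  rw [← w]
  exact ⟨u.hom.app y x, rfl⟩

lemma factor {f : W ⟶ V} (hinj : ∀ y, Function.Injective (f.hom.app y)) {t : T ⟶ V}
    (hle : range t.hom ≤ range f.hom) : ∃ u : T ⟶ W, u ≫ f = t := by
  have hmem : ∀ (y : B) (v : T.obj.obj y), t.hom.app y v ∈ LinearMap.range (f.hom.app y).hom :=
    fun y v => hle y ⟨v, rfl⟩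
  let u0 : ∀ y : B, T.obj.obj y →ₗ[k] W.obj.obj y := fun y =>
    (LinearEquiv.ofInjective (f.hom.app y).hom (hinj y)).symm.toLinearMap.comp
      (LinearMap.codRestrict (LinearMap.range (f.hom.app y).hom) (t.hom.app y).hom (hmem y))
  have hu0 : ∀ (y : B) (v : T.obj.obj y), f.hom.app y (u0 y v) = t.hom.app y v := by
    intro y v
    have h1 := (LinearEquiv.ofInjective (f.hom.app y).hom (hinj y)).apply_symm_apply
      ⟨t.hom.app y v, hmem y v⟩
    have h2 := congrArg Subtype.val h1
    rw [LinearEquiv.ofInjective_apply] at h2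
    exact h2
  refine ⟨ObjectProperty.homMk { app := fun y => ModuleCat.ofHom (u0 y), naturality := ?_ }, ?_⟩
  · intro y z g
    apply ModuleCat.hom_ext
    apply LinearMap.ext
    intro v
    apply hinj z
    show f.hom.app z (u0 z (T.obj.map g v)) = f.hom.app z (W.obj.map g (u0 y v))
    rw [hu0, nat_apply (F := W.obj) (G := V.obj) f.hom g, hu0]
    exact nat_apply t.hom g v
  · apply KMod.hom_ext
    intro y v
    exact hu0 y v

lemma factor_le {S S' : Subfunctor V.obj} (h : S ≤ S') : ∃ u : toObj S ⟶ toObj S', u ≫ ιm S' = ιm S :=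
  factor (fun y => Subtype.val_injective) (by simpa using h)

/-- The lattice of subobjects of `V` is the lattice of subfunctors. -/
noncomputable def subobjectIso (V : KMod k B) : Subobject V ≃o Subfunctor V.obj := by
  have hinj : ∀ (X : KMod k B) (t : X ⟶ V), Mono t → ∀ y, Function.Injective (t.hom.app y) :=
    fun X t ht y => injective_of_mono ht y
  have range_mk : ∀ (X : KMod k B) (t : X ⟶ V) (ht : Mono t),
      range (Subobject.mk t).arrow.hom = range t.hom := by
    intro X t ht
    haveI := ht
    have h1 : (Subobject.underlyingIso t).hom ≫ t = (Subobject.mk t).arrow :=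
      Subobject.underlyingIso_hom_comp_eq_mk t
    apply le_antisymm
    · exact range_comp_le h1
    · rintro y v ⟨x, rfl⟩
      refine ⟨(Subobject.underlyingIso t).inv.hom.app y x, ?_⟩
      have : ((Subobject.underlyingIso t).inv ≫ (Subobject.mk t).arrow).hom.app y x
          = t.hom.app y x := by
        rw [← h1, Iso.inv_hom_id_assoc]
      exact this
  have mk_range : ∀ (X : KMod k B) (t : X ⟶ V) (ht : Mono t),
      Subobject.mk (ιm (range t.hom)) = Subobject.mk t := by
    intro X t ht
    haveI := ht
    obtain ⟨u, hu⟩ := factor (t := ιm (range t.hom)) (hinj X t ht) (by simp)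
    obtain ⟨u', hu'⟩ := factor (f := ιm (range t.hom)) (t := t)
      (fun y => Subtype.val_injective) (by simp)
    have huu' : u' ≫ u = 𝟙 X := by
      haveI := ht
      rw [← cancel_mono t]
      rw [Category.assoc, hu, hu', Category.id_comp]
    have hu'u : u ≫ u' = 𝟙 (toObj (range t.hom)) := by
      rw [← cancel_mono (ιm (range t.hom))]
      rw [Category.assoc, hu', hu, Category.id_comp]
    exact Subobject.mk_eq_mk_of_comm _ _ ⟨u, u', hu'u, huu'⟩ hu
  refine
    { toFun := fun S => range S.arrow.hom
      invFun := fun N => Subobject.mk (ιm N)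
      left_inv := ?_
      right_inv := ?_
      map_rel_iff' := ?_ }
  · intro S
    have h1 := mk_range _ S.arrow inferInstance
    show Subobject.mk (ιm (range S.arrow.hom)) = S
    rw [h1, Subobject.mk_arrow]
  · intro N
    show range (Subobject.mk (ιm N)).arrow.hom = N
    rw [range_mk _ (ιm N) inferInstance, range_ιm]
  · intro S S'
    constructor
    · intro h
      obtain ⟨u, hu⟩ := factor (hinj _ S'.arrow inferInstance) h
      exact Subobject.le_of_comm u hu
    · intro h
      exact range_comp_le (Subobject.ofLE_arrow h)

lemma wfLT_iff (V : KMod k B) :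
    WellFoundedLT (Subobject V) ↔ WellFoundedLT (Subfunctor V.obj) :=
  ⟨fun _ => (subobjectIso V).symm.strictMono.wellFoundedLT,
   fun _ => (subobjectIso V).strictMono.wellFoundedLT⟩

lemma wfGT_iff (V : KMod k B) :
    WellFoundedGT (Subobject V) ↔ WellFoundedGT (Subfunctor V.obj) :=
  ⟨fun _ => (subobjectIso V).symm.strictMono.wellFoundedGT,
   fun _ => (subobjectIso V).strictMono.wellFoundedGT⟩

end KModObjects

section WFTransfer

lemma wfLT_of_subsingleton {α : Type*} [PartialOrder α] (h : Subsingleton α) :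
    WellFoundedLT α := by
  constructor
  constructor
  intro a
  constructor
  intro b hb
  exact absurd (h.elim b a ▸ hb) (lt_irrefl a)

lemma wfGT_of_subsingleton {α : Type*} [PartialOrder α] (h : Subsingleton α) :
    WellFoundedGT α := by
  constructor
  constructor
  intro a
  constructor
  intro b hb
  exact absurd (h.elim b a ▸ hb) (lt_irrefl a)

lemma subfunctor_subsingleton {F : B ⥤ ModuleCat.{0} k}
    (h : ∀ (y : B) (v : F.obj y), v = 0) : Subsingleton (Subfunctor F) := by
  constructor
  intro S T
  apply Subfunctor.ext'
  funext y
  have : ∀ (U : Subfunctor F), U.N y = ⊥ := by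
    intro U
    apply le_antisymm _ bot_le
    intro v hv
    simp [h y v]
  rw [this S, this T]

open Subfunctor in
lemma strictMono_pair {E F G : B ⥤ ModuleCat.{0} k} {i : E ⟶ F} {p : F ⟶ G}
    (hexact : ∀ y, LinearMap.range (i.app y).hom = LinearMap.ker (p.app y).hom) :
    StrictMono (fun S : Subfunctor F => (comap i S, map p S)) := by
  have key : ∀ S S' : Subfunctor F, S ≤ S' → comap i S' ≤ comap i S → map p S' ≤ map p S →
      S' ≤ S := by
    intro S S' hle h1 h2 y v hv
    have hmem : p.app y v ∈ (map p S).N y := h2 y ⟨v, hv, rfl⟩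
    obtain ⟨u, hu, huv⟩ := hmem
    have hker : p.app y (v - u) = 0 := by rw [map_sub, huv, sub_self]
    have hrange : v - u ∈ LinearMap.range (i.app y).hom := by rw [hexact y]; exact hker
    obtain ⟨e, he⟩ := hrange
    have he' : e ∈ (comap i S').N y := by
      show i.app y e ∈ S'.N y
      rw [he]
      exact (S'.N y).sub_mem hv (hle y hu)
    have he'' : i.app y e ∈ S.N y := h1 y he'
    rw [he] at he''
    have : u + (v - u) ∈ S.N y := (S.N y).add_mem hu he''
    simpa using this
  intro S S' hlt
  have hle : (comap i S, map p S) ≤ (comap i S', map p S') :=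
    ⟨comap_mono i hlt.le, map_mono p hlt.le⟩
  refine lt_of_le_of_ne hle ?_
  intro heq
  have h1 : comap i S = comap i S' := congrArg Prod.fst heq
  have h2 : map p S = map p S' := congrArg Prod.snd heq
  exact hlt.ne (le_antisymm hlt.le (key S S' hlt.le h1.ge h2.ge))

open Subfunctor in
lemma strictMono_comap_of_surjective {F G : B ⥤ ModuleCat.{0} k} {p : F ⟶ G}
    (hsurj : ∀ y, Function.Surjective (p.app y)) :
    StrictMono (comap p : Subfunctor G → Subfunctor F) := by
  apply (comap_mono p).strictMono_of_injective
  intro S T h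
  apply Subfunctor.ext'
  funext y
  have hS := Submodule.map_comap_eq_of_surjective (hsurj y) (S.N y)
  have hT := Submodule.map_comap_eq_of_surjective (hsurj y) (T.N y)
  rw [← hS, ← hT]
  congr 1
  exact congrArg (fun U : Subfunctor F => U.N y) h

open Subfunctor in
lemma wf_of_family :
    ∀ (n : ℕ) (F : B ⥤ ModuleCat.{0} k), IsKLinear k F →
    ∀ (G : Fin n → B ⥤ ModuleCat.{0} k) (η : ∀ i, F ⟶ G i),
    (∀ (y : B) (v : F.obj y), (∀ i, (η i).app y v = 0) → v = 0) →
    ((∀ i, WellFoundedLT (Subfunctor (G i))) → WellFoundedLT (Subfunctor F)) ∧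
    ((∀ i, WellFoundedGT (Subfunctor (G i))) → WellFoundedGT (Subfunctor F)) := by
  intro n
  induction n with
  | zero =>
    intro F hF G η hsep
    have h0 : ∀ (y : B) (v : F.obj y), v = 0 := fun y v => hsep y v (fun i => i.elim0)
    exact ⟨fun _ => wfLT_of_subsingleton (subfunctor_subsingleton h0),
           fun _ => wfGT_of_subsingleton (subfunctor_subsingleton h0)⟩
  | succ n IH =>
    intro F hF G η hsep
    set K : Subfunctor F := ker (η 0) with hK
    set E := K.toFunctor with hE
    have hElin : IsKLinear k E := toFunctor_isKLinear hF K
    set η' : ∀ i : Fin n, E ⟶ G i.succ := fun i => K.ι ≫ η i.succ with hη'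
    have hsep' : ∀ (y : B) (e : E.obj y), (∀ i, (η' i).app y e = 0) → e = 0 := by
      intro y e he
      have : e.1 = 0 := by
        apply hsep y e.1
        intro i
        refine Fin.cases ?_ ?_ i
        · exact e.2
        · intro j
          exact he j
      exact Subtype.ext this
    have hexact : ∀ y, LinearMap.range (K.ι.app y).hom = LinearMap.ker ((η 0).app y).hom := by
      intro y
      ext w
      constructor
      · rintro ⟨u, rfl⟩
        exact u.2
      · intro hw
        exact ⟨⟨w, hw⟩, rfl⟩
    have hmono := strictMono_pair (i := K.ι) (p := η 0) hexact
    constructor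
    · intro hG
      haveI hE' : WellFoundedLT (Subfunctor E) := (IH E hElin _ η' hsep').1 (fun i => hG i.succ)
      haveI hG0 : WellFoundedLT (Subfunctor (G 0)) := hG 0
      exact hmono.wellFoundedLT
    · intro hG
      haveI hE' : WellFoundedGT (Subfunctor E) := (IH E hElin _ η' hsep').2 (fun i => hG i.succ)
      haveI hG0 : WellFoundedGT (Subfunctor (G 0)) := hG 0
      exact hmono.wellFoundedGT

end WFTransfer

end Generic

section APart
set_option linter.unusedSectionVars false

lemma op_ksmul {a b : A} (r : k) (f : a ⟶ b) : (r • f).op = r • f.op := by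
  apply Quiver.Hom.unop_inj
  rw [unop_ksmul]
  rfl

/-- The additivity instance of a module. -/
lemma addOf (V : RMod k A) : V.obj.Additive := V.property.choose

lemma linOf (V : RMod k A) : Functor.Linear k V.obj :=
  V.property.choose_spec

/-- The action map: for `v ∈ V(y)`, `g : a ⟶ y.unop ↦ v · g ∈ V(a)`. -/
def act (V : RMod k A) {y : Aᵒᵖ} (v : V.obj.obj y) (a : A) :
    (a ⟶ y.unop) →ₗ[k] V.obj.obj (op a) := by
  haveI := addOf k A V; haveI := linOf k A V
  exact
  { toFun := fun g => V.obj.map g.op v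
    map_add' := by
      intro g g'
      show V.obj.map (g + g').op v = V.obj.map g.op v + V.obj.map g'.op v
      rw [op_add, Functor.map_add]
      rfl
    map_smul' := by
      intro r g
      show V.obj.map (r • g).op v = r • V.obj.map g.op v
      rw [op_ksmul, Functor.map_smul]
      rfl }

@[simp] lemma act_apply (V : RMod k A) {y : Aᵒᵖ} (v : V.obj.obj y) {a : A} (g : a ⟶ y.unop) :
    act k A V v a g = V.obj.map g.op v := rfl

lemma act_add (V : RMod k A) {y : Aᵒᵖ} (v w : V.obj.obj y) (a : A) :
    act k A V (v + w) a = act k A V v a + act k A V w a := by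
  apply LinearMap.ext
  intro g
  simp [map_add]

lemma act_smul (V : RMod k A) {y : Aᵒᵖ} (r : k) (v : V.obj.obj y) (a : A) :
    act k A V (r • v) a = r • act k A V v a := by
  apply LinearMap.ext
  intro g
  simp [map_smul]

/-- The dual of the left representable module `Hom(x, -)`, as a right module. -/
def dualRep (x : A) : Aᵒᵖ ⥤ ModuleCat.{0} k where
  obj y := ModuleCat.of k (Module.Dual k (x ⟶ y.unop))
  map {y z} f := ModuleCat.ofHom (CategoryTheory.Linear.rightComp k x f.unop).dualMap
  map_id y := ModuleCat.hom_ext <|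
    LinearMap.ext fun (φ : Module.Dual k (x ⟶ y.unop)) => LinearMap.ext fun g => by
    show φ (g ≫ (𝟙 y).unop) = φ g
    rw [unop_id, Category.comp_id]
  map_comp {y z w} f f' := ModuleCat.hom_ext <|
    LinearMap.ext fun (φ : Module.Dual k (x ⟶ y.unop)) => LinearMap.ext fun g => by
    show φ (g ≫ (f ≫ f').unop) = φ ((g ≫ f'.unop) ≫ f.unop)
    rw [unop_comp, Category.assoc]

/-- Reinterpret an element of the dual representable as a functional. -/
def asDual (x : A) {y : Aᵒᵖ} (φ : (dualRep k A x).obj y) : Module.Dual k (x ⟶ y.unop) := φ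

@[simp] lemma dualRep_map_apply (x : A) {y z : Aᵒᵖ} (f : y ⟶ z)
    (φ : (dualRep k A x).obj y) (g : x ⟶ z.unop) :
    asDual k A x ((dualRep k A x).map f φ) g = asDual k A x φ (g ≫ f.unop) := rfl

lemma dualRep_isKLinear (x : A) : IsKLinear k (dualRep k A x) := by
  have hA : (dualRep k A x).Additive := by
    constructor
    intro y z f g
    refine ModuleCat.hom_ext
      (LinearMap.ext fun (φ : Module.Dual k (x ⟶ y.unop)) => LinearMap.ext fun h => ?_)
    show φ (h ≫ (f + g).unop)
      = asDual k A x (((dualRep k A x).map f + (dualRep k A x).map g) φ) h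
    rw [unop_add, Preadditive.comp_add, map_add]
    rfl
  refine ⟨hA, ?_⟩
  haveI := hA
  constructor
  intro y z f r
  refine ModuleCat.hom_ext
    (LinearMap.ext fun (φ : Module.Dual k (x ⟶ y.unop)) => LinearMap.ext fun h => ?_)
  show φ (h ≫ (r • f).unop)
    = asDual k A x ((r • (dualRep k A x).map f) φ) h
  rw [unop_ksmul, CategoryTheory.Linear.comp_smul, map_smul]
  rfl

/-- The dual representable as an object of `RMod`. -/
def dualRepObj (x : A) : RMod k A := ⟨dualRep k A x, dualRep_isKLinear k A x⟩

/-- The evaluation morphism `V ⟶ D Hom(x,−)` attached to a functional `φ` on `V(x)`. -/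
def evalHom (V : RMod k A) (x : A) (φ : Module.Dual k (V.obj.obj (op x))) :
    V ⟶ dualRepObj k A x := ObjectProperty.homMk {
  app := fun y => ModuleCat.ofHom
    { toFun := fun v => φ.comp (act k A V v x)
      map_add' := by
        intro v w
        show φ.comp (act k A V (v + w) x) = φ.comp (act k A V v x) + φ.comp (act k A V w x)
        rw [act_add]
        apply LinearMap.ext
        intro g
        simp [map_add]
      map_smul' := by
        intro r v
        show φ.comp (act k A V (r • v) x) = r • φ.comp (act k A V v x)
        rw [act_smul]
        apply LinearMap.ext
        intro g
        simp [map_smul] }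
  naturality := by
    intro y z f
    refine ModuleCat.hom_ext (LinearMap.ext fun v => LinearMap.ext fun g => ?_)
    show φ (act k A V (V.obj.map f v) x g) = φ (act k A V v x (g ≫ f.unop))
    rw [act_apply, act_apply, op_comp, Quiver.Hom.op_unop, Functor.map_comp]
    rfl }

@[simp] lemma evalHom_apply (V : RMod k A) (x : A) (φ : Module.Dual k (V.obj.obj (op x)))
    (y : Aᵒᵖ) (v : V.obj.obj y) (g : x ⟶ y.unop) :
    asDual k A x ((evalHom k A V x φ).hom.app y v) g = φ (V.obj.map g.op v) := rfl

lemma evalHom_separates (V : RMod k A) (y : Aᵒᵖ) (v : V.obj.obj y)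
    (h : ∀ (x : A) (φ : Module.Dual k (V.obj.obj (op x))), (evalHom k A V x φ).hom.app y v = 0) :
    v = 0 := by
  haveI := addOf k A V
  rw [← Module.forall_dual_apply_eq_zero_iff k v]
  intro φ
  have h0 := h y.unop φ
  have h1 : asDual k A y.unop ((evalHom k A V y.unop φ).hom.app y v) (𝟙 y.unop)
      = φ (V.obj.map (𝟙 y.unop).op v) := evalHom_apply k A V y.unop φ y v (𝟙 y.unop)
  rw [h0] at h1
  have h2 : (𝟙 y.unop : y.unop ⟶ y.unop).op = 𝟙 y := rfl
  rw [h2, V.obj.map_id] at h1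
  have h3 : asDual k A y.unop (0 : (dualRep k A y.unop).obj y) (𝟙 y.unop) = 0 := rfl
  exact h1.symm.trans h3

/-- Coyoneda membership helper: the underlying functor of `reprL`. -/
lemma reprL_map_apply (x : A) {y z : A} (f : y ⟶ z) (g : x ⟶ y) :
    (reprL k A x).obj.map f g = g ≫ f := rfl

/-- Annihilator of a subfunctor of the dual representable. -/
def annD (x : A) (U : Subfunctor (dualRep k A x)) : Subfunctor ((reprL k A x).obj) where
  N y := Submodule.dualCoannihilator
    (U.N (op y) : Submodule k (Module.Dual k (x ⟶ y)))
  stable := by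
    intro y z f g hg
    have hg' := (Submodule.mem_dualCoannihilator (Φ := U.N (op y)) g).mp hg
    refine (Submodule.mem_dualCoannihilator (Φ := U.N (op z)) _).mpr ?_
    intro ψ hψ
    exact hg' _ (U.stable f.op ψ hψ)

/-- Annihilator of a subfunctor of the representable. -/
def annC (x : A) (M : Subfunctor ((reprL k A x).obj)) : Subfunctor (dualRep k A x) where
  N w := (Submodule.dualAnnihilator (M.N w.unop) : Submodule k (Module.Dual k (x ⟶ w.unop)))
  stable := by
    intro w w' f ψ hψ
    have hψ' := (Submodule.mem_dualAnnihilator (W := M.N w.unop) ψ).mp hψ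
    refine (Submodule.mem_dualAnnihilator (W := M.N w'.unop) _).mpr ?_
    intro g hg
    exact hψ' _ (M.stable f.unop g hg)

lemma annD_annC (x : A) (M : Subfunctor ((reprL k A x).obj)) :
    annD k A x (annC k A x M) = M := by
  apply Subfunctor.ext'
  funext y
  exact Subspace.dualAnnihilator_dualCoannihilator_eq

lemma annC_annD (hfd : ∀ x y : A, FiniteDimensional k (x ⟶ y)) (x : A)
    (U : Subfunctor (dualRep k A x)) : annC k A x (annD k A x U) = U := by
  apply Subfunctor.ext'
  funext w
  haveI := hfd x w.unop
  haveI : FiniteDimensional k ((dualRep k A x).obj w) :=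
    (inferInstance : FiniteDimensional k (Module.Dual k (x ⟶ w.unop)))
  exact @Subspace.dualCoannihilator_dualAnnihilator_eq _ _ _ _ _ _
    (FiniteDimensional.finiteDimensional_submodule (K := k) (V := Module.Dual k (x ⟶ w.unop)) _)

lemma annD_anti (x : A) {U U' : Subfunctor (dualRep k A x)} (h : U ≤ U') :
    annD k A x U' ≤ annD k A x U := by
  intro y
  exact Submodule.dualCoannihilator_anti (h (op y))

lemma wfGT_dualRep (hfd : ∀ x y : A, FiniteDimensional k (x ⟶ y))
    (hdccL : ∀ x : A, WellFoundedLT (Subobject (reprL k A x))) (x : A) :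
    WellFoundedGT (Subfunctor (dualRep k A x)) := by
  haveI hL : WellFoundedLT (Subfunctor ((reprL k A x).obj)) :=
    (wfLT_iff (reprL k A x)).mp (hdccL x)
  have hsm : StrictMono (fun U : Subfunctor (dualRep k A x) =>
      OrderDual.toDual (annD k A x U)) := by
    intro U U' hlt
    rw [OrderDual.toDual_lt_toDual]
    refine lt_of_le_of_ne (annD_anti k A x hlt.le) ?_
    intro heq
    apply hlt.ne
    rw [← annC_annD k A hfd x U, ← annC_annD k A hfd x U', heq]
  exact hsm.wellFoundedGT

end APart

section APart2
set_option linter.unusedSectionVars false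

open Subfunctor

lemma mem_finset_inf {J : Type} {F : Aᵒᵖ ⥤ ModuleCat.{0} k} (s : Finset J)
    (f : J → Subfunctor F) (y : Aᵒᵖ) (v : F.obj y) :
    v ∈ (s.inf f).N y ↔ ∀ j ∈ s, v ∈ (f j).N y := by
  classical
  induction s using Finset.induction with
  | empty => simp
  | insert j s hj ih =>
    rw [Finset.inf_insert]
    simp only [Finset.mem_insert]
    constructor
    · rintro ⟨h1, h2⟩ j (rfl | hj2)
      · exact h1
      · exact (ih.mp h2) j hj2
    · intro h
      exact ⟨h _ (Or.inl rfl), ih.mpr (fun j hj2 => h j (Or.inr hj2))⟩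

/-- Projection from the finite sum of representables. -/
def projHom {n : ℕ} (x : Fin n → A) (i : Fin n) :
    sumReprRFunctor k A x ⟶ (reprR k A (x i)).obj where
  app y := ModuleCat.ofHom (LinearMap.proj i)
  naturality {y z} f := by
    apply ModuleCat.hom_ext
    apply LinearMap.ext
    intro gs
    rfl

lemma artinian_of_fg (hdccR : ∀ x : A, WellFoundedLT (Subobject (reprR k A x)))
    (V : RMod k A) (hFG : RMod.IsFG k A V) : WellFoundedLT (Subfunctor V.obj) := by
  obtain ⟨n, x, p, hp⟩ := hFG
  have hsurj : ∀ y, Function.Surjective (p.hom.app y) := surjective_of_epi hp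
  have hsm := strictMono_comap_of_surjective
    (F := (sumReprR k A x).obj) (G := V.obj) (p := p.hom) hsurj
  haveI : WellFoundedLT (Subfunctor ((sumReprR k A x).obj)) := by
    apply (wf_of_family n (sumReprRFunctor k A x) (sumReprR k A x).property
      (fun i => (reprR k A (x i)).obj) (fun i => projHom k A x i) ?_).1
    · intro i
      exact (wfLT_iff (reprR k A (x i))).mp (hdccR (x i))
    · intro y gs h
      funext i
      exact h i
  exact hsm.wellFoundedLT

lemma fcog_of_artinian (V : RMod k A) (hArt : WellFoundedLT (Subfunctor V.obj)) :
    RMod.IsFCog k A V := by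
  classical
  intro J D f hmono hz
  set R : J → Subfunctor V.obj := fun j => Subfunctor.range (f j).hom with hR
  set g : Finset J → Subfunctor V.obj := fun s => s.inf R with hg
  obtain ⟨m, ⟨s₀, rfl⟩, hmin⟩ := hArt.wf.has_min (Set.range g) ⟨g ∅, ⟨∅, rfl⟩⟩
  have hle : ∀ j, g s₀ ≤ R j := by
    intro j
    have h1 : g (insert j s₀) ≤ g s₀ := Finset.inf_mono (Finset.subset_insert j s₀)
    have h2 : ¬ g (insert j s₀) < g s₀ := hmin _ ⟨_, rfl⟩
    have h3 : g (insert j s₀) = g s₀ := h1.lt_or_eq.resolve_left h2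
    calc g s₀ = g (insert j s₀) := h3.symm
      _ ≤ R j := Finset.inf_le (Finset.mem_insert_self j s₀)
  refine ⟨s₀, ?_⟩
  intro T t ht hfac
  have h1 : Subfunctor.range t.hom ≤ g s₀ := by
    apply Finset.le_inf
    intro j hj
    obtain ⟨u, hu⟩ := hfac j hj
    exact range_comp_le hu
  apply hz T t ht
  intro j
  exact factor (injective_of_mono (hmono j)) (h1.trans (hle j))

lemma noetherian_of_fcog (hfd : ∀ x y : A, FiniteDimensional k (x ⟶ y))
    (hdccL : ∀ x : A, WellFoundedLT (Subobject (reprL k A x)))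
    (V : RMod k A) (hcog : RMod.IsFCog k A V) : WellFoundedGT (Subfunctor V.obj) := by
  classical
  set J := (x : A) × Module.Dual k (V.obj.obj (op x)) with hJ
  set η : ∀ j : J, V ⟶ dualRepObj k A j.1 := fun j => evalHom k A V j.1 j.2 with hη
  set Dj : J → RMod k A := fun j => toObj (Subfunctor.ker (η j).hom) with hDj
  set fj : ∀ j, Dj j ⟶ V := fun j => ιm (Subfunctor.ker (η j).hom) with hfj
  have hmono : ∀ j, Mono (fj j) := fun j => inferInstance
  have hker_range : ∀ (j : J) (T : RMod k A) (t : T ⟶ V),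
      (∃ u : T ⟶ Dj j, u ≫ fj j = t) → ∀ (y : Aᵒᵖ) (v : T.obj.obj y),
        (η j).hom.app y (t.hom.app y v) = 0 := by
    rintro j T t ⟨u, hu⟩ y v
    have h1 : t.hom.app y v = ((u ≫ fj j).hom.app y v) := by rw [hu]
    have h2 : ((u ≫ fj j).hom.app y v) = (u.hom.app y v).1 := rfl
    rw [h1, h2]
    exact (u.hom.app y v).2
  have hz : ∀ (T : RMod k A) (t : T ⟶ V), Mono t →
      (∀ j, ∃ u : T ⟶ Dj j, u ≫ fj j = t) → t = 0 := by
    intro T t ht hf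
    apply KMod.hom_ext
    intro y v
    have : t.hom.app y v = 0 := by
      apply evalHom_separates
      intro x φ
      exact hker_range ⟨x, φ⟩ T t (hf ⟨x, φ⟩) y v
    rw [this]
    rfl
  obtain ⟨s, hs⟩ := hcog J Dj fj hmono hz
  set Ksub : Subfunctor V.obj := s.inf (fun j => Subfunctor.ker (η j).hom) with hKsub
  have hK : Ksub = ⊥ := by
    rw [Subfunctor.eq_bot_iff']
    intro y v hv
    have hfacs : ∀ j ∈ s, ∃ u : toObj Ksub ⟶ Dj j, u ≫ fj j = ιm Ksub := by
      intro j hj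
      exact factor_le (Finset.inf_le hj)
    have h0 : ιm Ksub = 0 := hs (toObj Ksub) (ιm Ksub) inferInstance hfacs
    have h1 := congrArg (fun q : toObj Ksub ⟶ V => q.hom.app y ⟨v, hv⟩) h0
    exact h1
  set n := s.card with hn
  set e : Fin n → {j // j ∈ s} := fun i => s.equivFin.symm i with he
  apply (wf_of_family n V.obj V.property (fun i => dualRep k A (e i).1.1)
    (fun i => (η (e i).1).hom) ?_).2
  · intro i
    exact wfGT_dualRep k A hfd hdccL (e i).1.1
  · intro y v hv
    have hvK : v ∈ Ksub.N y := by
      rw [hKsub, mem_finset_inf]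
      intro j hj
      have h1 : (η (e (s.equivFin ⟨j, hj⟩)).1).hom.app y v = 0 := hv (s.equivFin ⟨j, hj⟩)
      have h2 : e (s.equivFin ⟨j, hj⟩) = ⟨j, hj⟩ := s.equivFin.symm_apply_apply _
      rw [h2] at h1
      exact h1
    rw [hK] at hvK
    simpa using hvK

/-- The morphism generated by a finite family of elements. -/
def genHom (V : RMod k A) {n : ℕ} (x : Fin n → A) (v : ∀ i, V.obj.obj (op (x i))) :
    sumReprRFunctor k A x ⟶ V.obj where
  app y := ModuleCat.ofHom (∑ i, (act k A V (v i) y.unop).comp (LinearMap.proj i))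
  naturality {y z} f := by
    apply ModuleCat.hom_ext
    apply LinearMap.ext
    intro gs
    have hL : ∀ (w : Aᵒᵖ) (hs : (sumReprRFunctor k A x).obj w),
        (∑ i, (act k A V (v i) w.unop).comp (LinearMap.proj i)) hs
          = ∑ i, V.obj.map (hs i).op (v i) := by
      intro w hs
      exact LinearMap.sum_apply _ _ _
    show (∑ i, (act k A V (v i) z.unop).comp (LinearMap.proj i))
        ((sumReprRFunctor k A x).map f gs)
      = V.obj.map f ((∑ i, (act k A V (v i) y.unop).comp (LinearMap.proj i)) gs)
    rw [hL, hL, map_sum]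
    apply Finset.sum_congr rfl
    intro i _
    have h1 : ((sumReprRFunctor k A x).map f gs) i = f.unop ≫ gs i := rfl
    rw [h1, op_comp, Quiver.Hom.op_unop, Functor.map_comp]
    rfl

lemma genHom_apply (V : RMod k A) {n : ℕ} (x : Fin n → A) (v : ∀ i, V.obj.obj (op (x i)))
    (y : Aᵒᵖ) (gs : ∀ i, y.unop ⟶ x i) :
    ((genHom k A V x v).app y).hom gs = ∑ i, V.obj.map (gs i).op (v i) := by
  show (∑ i, (act k A V (v i) y.unop).comp (LinearMap.proj i)) gs = _
  exact LinearMap.sum_apply _ _ _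

lemma fg_of_noetherian (V : RMod k A) (hN : WellFoundedGT (Subfunctor V.obj)) :
    RMod.IsFG k A V := by
  classical
  set S : Set (Subfunctor V.obj) :=
    {M | ∃ (n : ℕ) (x : Fin n → A) (v : ∀ i, V.obj.obj (op (x i))),
      M = Subfunctor.range (genHom k A V x v)} with hS
  have hne : S.Nonempty := ⟨_, 0, Fin.elim0, fun i => i.elim0, rfl⟩
  obtain ⟨M, hM, hmax⟩ := hN.wf.has_min S hne
  obtain ⟨n, x, v, rfl⟩ := hM
  have htop : Subfunctor.range (genHom k A V x v) = ⊤ := by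
    by_contra hne2
    have : ∃ (y : Aᵒᵖ) (w : V.obj.obj y), w ∉ (Subfunctor.range (genHom k A V x v)).N y := by
      by_contra hall
      push_neg at hall
      exact hne2 ((Subfunctor.eq_top_iff' _).mpr hall)
    obtain ⟨y, w, hw⟩ := this
    -- extended family
    set x' : Fin (n + 1) → A := fun i =>
      match i with
      | ⟨0, _⟩ => y.unop
      | ⟨j + 1, h⟩ => x ⟨j, Nat.lt_of_succ_lt_succ h⟩ with hx'
    set v' : ∀ i, V.obj.obj (op (x' i)) := fun i =>
      match i with
      | ⟨0, _⟩ => (show V.obj.obj (op y.unop) from w)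
      | ⟨j + 1, h⟩ => v ⟨j, Nat.lt_of_succ_lt_succ h⟩ with hv'
    set M' := Subfunctor.range (genHom k A V x' v') with hM'
    have hv0 : v' 0 = w := rfl
    have hwM' : w ∈ M'.N y := by
      refine ⟨Pi.single 0 (𝟙 y.unop), ?_⟩
      rw [genHom_apply, Fin.sum_univ_succ]
      have h0 : (Pi.single (0 : Fin (n+1)) (𝟙 y.unop) : ∀ i, y.unop ⟶ x' i) 0 = 𝟙 y.unop :=
        Pi.single_eq_same _ _
      have hsucc : ∀ i : Fin n,
          (Pi.single (0 : Fin (n+1)) (𝟙 y.unop) : ∀ i, y.unop ⟶ x' i) i.succ = 0 :=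
        fun i => Pi.single_eq_of_ne (Fin.succ_ne_zero i) _
      rw [h0]
      have hz2 : ∀ i : Fin n,
          V.obj.map ((Pi.single (0 : Fin (n+1)) (𝟙 y.unop) : ∀ i, y.unop ⟶ x' i) i.succ).op
            (v' i.succ) = 0 := by
        intro i
        haveI := addOf k A V
        rw [hsucc i, op_zero, Functor.map_zero]
        rfl
      rw [Finset.sum_congr rfl (fun i _ => hz2 i), Finset.sum_const, smul_zero, add_zero]
      show V.obj.map (𝟙 y) (v' 0) = w
      rw [V.obj.map_id]
      exact hv0
    have hMM' : Subfunctor.range (genHom k A V x v) ≤ M' := by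
      rintro z u ⟨gs, rfl⟩
      set gs' : ∀ i, z.unop ⟶ x' i := fun i =>
        match i with
        | ⟨0, _⟩ => (0 : z.unop ⟶ y.unop)
        | ⟨j + 1, h⟩ => gs ⟨j, Nat.lt_of_succ_lt_succ h⟩ with hgs'
      have hgs0 : gs' 0 = 0 := rfl
      have hgsS : ∀ i : Fin n, gs' i.succ = gs i := fun i => rfl
      have hvS : ∀ i : Fin n, V.obj.map (gs' i.succ).op (v' i.succ)
          = V.obj.map (gs i).op (v i) := fun i => rfl
      refine ⟨gs', ?_⟩
      rw [genHom_apply, genHom_apply k A V x v z gs, Fin.sum_univ_succ]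
      haveI := addOf k A V
      have h0 : V.obj.map (gs' 0).op (v' 0) = 0 := by
        rw [hgs0, op_zero, Functor.map_zero]
        rfl
      rw [h0, zero_add]
      exact Finset.sum_congr rfl (fun i _ => hvS i)
    have hlt : Subfunctor.range (genHom k A V x v) < M' :=
      lt_of_le_of_ne hMM' (fun heq => hw (heq ▸ hwM'))
    exact hmax M' ⟨n + 1, x', v', rfl⟩ hlt
  refine ⟨n, x, ObjectProperty.homMk (genHom k A V x v), ?_⟩
  apply epi_of_surjective (V := V) (W := sumReprR k A x)
  intro y u
  have : u ∈ (Subfunctor.range (genHom k A V x v)).N y := by rw [htop]; trivial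
  exact this

end APart2
/-!
STATEMENT 12: if `A` is a finite-dimensional category such that every representable
right and left module satisfies the descending chain condition on subobjects
(`Mod-A` is Artinian), then for `V` in `Mod-A` the following are equivalent:
(a) `V` is finitely generated; (b) `V` is finitely cogenerated; (c) `V` has finite
length, i.e. its subobject lattice satisfies both chain conditions
(DCC = `WellFoundedLT`, ACC = `WellFoundedGT`).
-/
theorem statement_12
    (hfd : ∀ x y : A, FiniteDimensional k (x ⟶ y))
    (hdccR : ∀ x : A, WellFoundedLT (Subobject (reprR k A x)))
    (hdccL : ∀ x : A, WellFoundedLT (Subobject (reprL k A x)))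
    (V : RMod k A) :
    (RMod.IsFG k A V ↔ RMod.IsFCog k A V) ∧
    (RMod.IsFG k A V ↔
      (WellFoundedLT (Subobject V) ∧ WellFoundedGT (Subobject V))) := by
  have h1 : RMod.IsFG k A V → WellFoundedLT (Subfunctor V.obj) :=
    artinian_of_fg k A hdccR V
  have h2 : WellFoundedLT (Subfunctor V.obj) → RMod.IsFCog k A V :=
    fcog_of_artinian k A V
  have h3 : RMod.IsFCog k A V → WellFoundedGT (Subfunctor V.obj) :=
    noetherian_of_fcog k A hfd hdccL V
  have h4 : WellFoundedGT (Subfunctor V.obj) → RMod.IsFG k A V :=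
    fg_of_noetherian k A V
  constructor
  · exact ⟨fun h => h2 (h1 h), fun h => h4 (h3 h)⟩
  · constructor
    · intro h
      exact ⟨(wfLT_iff V).mpr (h1 h), (wfGT_iff V).mpr (h3 (h2 (h1 h)))⟩
    · rintro ⟨hl, hg⟩
      exact h4 ((wfGT_iff V).mp hg)
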